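/- arXiv:1804.11094 — 2 statements merged into one kernel-verified Lean document; each statement's English description precedes it below -/
import Mathlib

section
/- Any two edges of the n-dimensional hypercube Q_n (n ≥ 2) are contained in a common Hamiltonian cycle. -/
set_option linter.unusedSectionVars false

def Q (n : ℕ) : SimpleGraph (Fin n → ZMod 2) where
  Adj x y := hammingDist x y = 1
  symm := ⟨fun x y h => by rw [hammingDist_comm]; exact h⟩
  loopless := ⟨fun x h => by simp [hammingDist_self] at h⟩

open SimpleGraph Walk Finset Fin

section General

variable {V : Type*} [DecidableEq V] {G : SimpleGraph V}

lemma edge_start {x y w : V} (p : G.Walk x y) (hp : p.IsPath) (hw : s(x, w) ∈ p.edges) :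
    ∃ (h : G.Adj x w) (r : G.Walk w y), p = Walk.cons h r := by
  cases p with
  | nil => simp at hw
  | cons h q =>
    rename_i b
    rw [Walk.edges_cons, List.mem_cons] at hw
    rcases hw with hw | hw
    · rw [Sym2.eq_iff] at hw
      rcases hw with ⟨-, rfl⟩ | ⟨rfl, rfl⟩
      · exact ⟨h, q, rfl⟩
      · exact absurd rfl h.ne
    · exfalso
      have hx : x ∈ q.support := q.fst_mem_support_of_mem_edges hw
      rw [Walk.cons_isPath_iff] at hp
      exact hp.2 hx

lemma hamRotate {a u : V} {c : G.Walk a a} (hc : c.IsHamiltonianCycle)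
    (hu : u ∈ c.support) : (c.rotate u hu).IsHamiltonianCycle := by
  rw [Walk.isHamiltonianCycle_iff_isCycle_and_support_count_tail_eq_one]
  refine ⟨hc.isCycle.rotate hu, fun w => ?_⟩
  have h1 := (Walk.support_rotate c u hu).perm.count_eq w
  rw [h1]
  have h2 := hc.isHamiltonian_tail w
  rwa [Walk.support_tail_of_not_nil c hc.isCycle.not_nil] at h2

/-- Removing an edge `s(u,v)` from a Hamiltonian cycle yields a Hamiltonian path from `u` to `v`
containing all the other edges. -/
lemma extract {a u v : V} (c : G.Walk a a) (hc : c.IsHamiltonianCycle)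
    (huv : s(u, v) ∈ c.edges) :
    ∃ p : G.Walk u v, p.IsPath ∧ (∀ w, w ∈ p.support) ∧
      ∀ g ∈ c.edges, g ≠ s(u, v) → g ∈ p.edges := by
  have hu : u ∈ c.support := c.fst_mem_support_of_mem_edges huv
  set c' := c.rotate u hu with hc'def
  have hc' : c'.IsHamiltonianCycle := hamRotate hc hu
  have hedges : ∀ g, g ∈ c'.edges ↔ g ∈ c.edges := fun g => (c.rotate_edges u hu).mem_iff
  have huv' : s(u, v) ∈ c'.edges := (hedges _).2 huv
  clear_value c'
  -- replace membership goal about c by c'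
  suffices h : ∃ p : G.Walk u v, p.IsPath ∧ (∀ w, w ∈ p.support) ∧
      ∀ g ∈ c'.edges, g ≠ s(u, v) → g ∈ p.edges by
    obtain ⟨p, h1, h2, h3⟩ := h
    exact ⟨p, h1, h2, fun g hg hne => h3 g ((hedges g).2 hg) hne⟩
  cases c' with
  | nil => simp at huv'
  | cons h q =>
    rename_i b
    have hcyc := hc'.isCycle
    rw [Walk.cons_isCycle_iff] at hcyc
    obtain ⟨hqpath, hqe⟩ := hcyc
    have hcov : ∀ w, w ∈ q.support := by
      intro w
      have := hc'.mem_support w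
      rw [Walk.support_cons, List.mem_cons] at this
      rcases this with rfl | h'
      · exact q.end_mem_support
      · exact h'
    rw [Walk.edges_cons, List.mem_cons] at huv'
    rcases huv' with huv' | huv'
    · -- first edge: v = b
      rw [Sym2.eq_iff] at huv'
      rcases huv' with ⟨-, rfl⟩ | ⟨rfl, rfl⟩
      · refine ⟨q.reverse, hqpath.reverse, ?_, ?_⟩
        · intro w; rw [Walk.support_reverse, List.mem_reverse]; exact hcov w
        · intro g hg hne
          rw [Walk.edges_cons, List.mem_cons] at hg
          rcases hg with rfl | hg
          · exact absurd rfl hne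
          · rwa [Walk.edges_reverse, List.mem_reverse]
      · exact absurd rfl h.ne
    · -- last edge
      have huv2 : s(u, v) ∈ q.reverse.edges := by rwa [Walk.edges_reverse, List.mem_reverse]
      obtain ⟨h2, r, hqr⟩ := edge_start q.reverse hqpath.reverse huv2
      have hq : q = (Walk.cons h2 r).reverse := by rw [← hqr, Walk.reverse_reverse]
      have hqsup : q.support = r.support.reverse ++ [u] := by
        rw [hq, Walk.support_reverse, Walk.support_cons]; simp
      have hqed : q.edges = r.edges.reverse ++ [s(u, v)] := by
        rw [hq, Walk.edges_reverse, Walk.edges_cons]; simp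
      refine ⟨Walk.cons h r.reverse, ?_, ?_, ?_⟩
      · rw [Walk.cons_isPath_iff]
        have hnd := hqpath.support_nodup
        rw [hqsup] at hnd
        have := List.Nodup.of_append_left hnd
        constructor
        · rw [Walk.isPath_def, Walk.support_reverse]
          exact this
        · intro hmem
          rw [Walk.support_reverse] at hmem
          have : List.Disjoint r.support.reverse [u] := List.disjoint_of_nodup_append hnd
          exact this hmem (by simp)
      · intro w
        have := hcov w
        rw [hqsup, List.mem_append] at this
        rw [Walk.support_cons, Walk.support_reverse, List.mem_cons]
        rcases this with h' | h'
        · right; exact h'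
        · left; simpa using h'
      · intro g hg hne
        rw [Walk.edges_cons, List.mem_cons] at hg ⊢
        rcases hg with rfl | hg
        · left; rfl
        · rw [hqed, List.mem_append] at hg
          rcases hg with hg | hg
          · right; rwa [Walk.edges_reverse]
          · simp at hg; exact absurd hg hne

/-- A cycle has at least three edges, so one avoiding any two given values. -/
lemma exists_third_edge {a : V} {c : G.Walk a a} (hc : c.IsCycle) (e f : Sym2 V) :
    ∃ g ∈ c.edges, g ≠ e ∧ g ≠ f := by
  have hlen : 3 ≤ c.edges.length := by rw [Walk.length_edges]; exact hc.three_le_length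
  have hnd : c.edges.Nodup := hc.isTrail.edges_nodup
  match hl : c.edges, hlen with
  | g1 :: g2 :: g3 :: rest, _ =>
    rw [hl] at hnd
    simp only [List.nodup_cons, List.mem_cons] at hnd
    have h12 : g1 ≠ g2 := fun h => hnd.1 (Or.inl h)
    have h13 : g1 ≠ g3 := fun h => hnd.1 (Or.inr (Or.inl h))
    have h23 : g2 ≠ g3 := fun h => hnd.2.1 (Or.inl h)
    by_cases h1e : g1 = e
    · by_cases h2f : g2 = f
      · exact ⟨g3, by simp, fun h => h13 (h1e.trans h.symm), fun h => h23 (h2f.trans h.symm)⟩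
      · by_cases h2e : g2 = e
        · exact absurd (h1e.trans h2e.symm) h12
        · exact ⟨g2, by simp, h2e, h2f⟩
    · by_cases h1f : g1 = f
      · by_cases h2e : g2 = e
        · exact ⟨g3, by simp, fun h => h23 (h2e.trans h.symm), fun h => h13 (h1f.trans h.symm)⟩
        · exact ⟨g2, by simp, h2e, fun h => h12 (h1f.trans h.symm)⟩
      · exact ⟨g1, by simp, h1e, h1f⟩


end General

lemma hammingDist_snoc {n : ℕ} (x y : Fin n → ZMod 2) (a b : ZMod 2) :
    hammingDist (Fin.snoc x a : Fin (n+1) → ZMod 2) (Fin.snoc y b) = hammingDist x y + if a = b then 0 else 1 := by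
  classical
  simp only [hammingDist]
  rw [Finset.card_filter, Finset.card_filter, Fin.sum_univ_castSucc]
  simp [Fin.snoc_castSucc, Fin.snoc_last]

def emb (n : ℕ) (c : ZMod 2) : Q n →g Q (n+1) where
  toFun x := Fin.snoc x c
  map_rel' := by
    intro x y h
    show hammingDist _ _ = 1
    rw [hammingDist_snoc]
    have h' : hammingDist x y = 1 := h
    simpa using h'

@[simp] lemma emb_apply (n : ℕ) (c : ZMod 2) (x : Fin n → ZMod 2) :
    emb n c x = Fin.snoc x c := rfl

lemma emb_inj (n : ℕ) (c : ZMod 2) : Function.Injective (emb n c) := by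
  intro x y h
  have := congrArg Fin.init h
  simpa [Fin.init_snoc] using this

lemma adj_cross {n : ℕ} (x : Fin n → ZMod 2) (a b : ZMod 2) (hab : a ≠ b) :
    (Q (n+1)).Adj (Fin.snoc x a) (Fin.snoc x b) := by
  show hammingDist _ _ = 1
  rw [hammingDist_snoc]
  simp [hammingDist_self, hab]

lemma zmod2_cases (a : ZMod 2) : a = 0 ∨ a = 1 := by revert a; decide

lemma mem_emb_support_last {n : ℕ} {c : ZMod 2} {u v : Fin n → ZMod 2} (p : (Q n).Walk u v)
    {z : Fin (n+1) → ZMod 2} (hz : z ∈ (p.map (emb n c)).support) : z (Fin.last n) = c := by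
  rw [Walk.support_map, List.mem_map] at hz
  obtain ⟨w, -, rfl⟩ := hz
  simp

lemma mem_emb_edge_last {n : ℕ} {c : ZMod 2} {u v : Fin n → ZMod 2} (p : (Q n).Walk u v)
    {g : Sym2 (Fin (n+1) → ZMod 2)} (hg : g ∈ (p.map (emb n c)).edges) :
    ∀ z ∈ g, z (Fin.last n) = c := by
  rw [Walk.edges_map, List.mem_map] at hg
  obtain ⟨g', -, rfl⟩ := hg
  intro z hz
  rw [Sym2.mem_map] at hz
  obtain ⟨w, -, rfl⟩ := hz
  simp

lemma glue {n : ℕ} (u v : Fin n → ZMod 2) (huv : u ≠ v) (p0 p1 : (Q n).Walk u v)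
    (h0p : p0.IsPath) (h0c : ∀ w, w ∈ p0.support)
    (h1p : p1.IsPath) (h1c : ∀ w, w ∈ p1.support) :
    ∃ c : (Q (n+1)).Walk (Fin.snoc u 0) (Fin.snoc u 0), c.IsHamiltonianCycle ∧
      (∀ g ∈ p0.edges, Sym2.map (fun z => (Fin.snoc z 0 : Fin (n+1) → ZMod 2)) g ∈ c.edges) ∧
      (∀ g ∈ p1.edges, Sym2.map (fun z => (Fin.snoc z 1 : Fin (n+1) → ZMod 2)) g ∈ c.edges) := by
  classical
  set m0 := p0.map (emb n 0) with hm0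
  set m1 := p1.map (emb n 1) with hm1
  have adjv : (Q (n+1)).Adj (emb n 0 v) (emb n 1 v) := adj_cross v 0 1 (by decide)
  have adju : (Q (n+1)).Adj (emb n 1 u) (emb n 0 u) := adj_cross u 1 0 (by decide)
  set c : (Q (n+1)).Walk (emb n 0 u) (emb n 0 u) :=
    m0.append (Walk.cons adjv (m1.reverse.append (Walk.cons adju Walk.nil))) with hc
  have hsup : c.support = m0.support ++ (m1.support.reverse ++ [Fin.snoc u 0]) := by
    rw [hc]
    rw [Walk.support_append]
    simp only [Walk.tail_support_append, Walk.support_cons, List.tail_cons,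
      Walk.support_append, Walk.support_reverse, Walk.support_nil]
    rfl
  have hedges : c.edges = m0.edges ++ (s(Fin.snoc v 0, Fin.snoc v 1) ::
      (m1.edges.reverse ++ [s(Fin.snoc u 1, Fin.snoc u 0)])) := by
    rw [hc]
    simp only [Walk.edges_append, Walk.edges_cons, Walk.edges_reverse, Walk.edges_nil]
    rfl
  -- supports of the two copies
  have hm0sup : m0.support = p0.support.map (fun z => (Fin.snoc z 0 : Fin (n+1) → ZMod 2)) := by
    rw [hm0, Walk.support_map]; rfl
  have hm1sup : m1.support = p1.support.map (fun z => (Fin.snoc z 1 : Fin (n+1) → ZMod 2)) := by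
    rw [hm1, Walk.support_map]; rfl
  have hm0nd : m0.support.Nodup := by
    rw [hm0sup]; exact h0p.support_nodup.map (emb_inj n 0)
  have hm1nd : m1.support.Nodup := by
    rw [hm1sup]; exact h1p.support_nodup.map (emb_inj n 1)
  have hlast0 : ∀ z ∈ m0.support, z (Fin.last n) = 0 := fun z hz => mem_emb_support_last p0 hz
  have hlast1 : ∀ z ∈ m1.support, z (Fin.last n) = 1 := fun z hz => mem_emb_support_last p1 hz
  have hu0last : (Fin.snoc u 0 : Fin (n+1) → ZMod 2) (Fin.last n) = 0 := by simp
  -- the support tail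
  have hm0cons : m0.support = Fin.snoc u 0 :: m0.support.tail := by
    rw [hm0]; exact (Walk.support_eq_cons _)
  have hstail : c.support.tail = m0.support.tail ++ (m1.support.reverse ++ [Fin.snoc u 0]) := by
    rw [hsup, List.tail_append_of_ne_nil (Walk.support_ne_nil _)]
  -- nodup of tail
  have htailnd : c.support.tail.Nodup := by
    rw [hstail]
    rw [List.nodup_append]
    refine ⟨by rw [hm0cons] at hm0nd; exact (List.nodup_cons.1 hm0nd).2, ?_, ?_⟩
    · rw [List.nodup_append]
      refine ⟨List.nodup_reverse.2 hm1nd, List.nodup_singleton _, ?_⟩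
      intro z hz w hz' hzw
      subst hzw
      rw [List.mem_singleton] at hz'
      subst hz'
      have := hlast1 _ (List.mem_reverse.1 hz)
      rw [hu0last] at this
      exact absurd this (by decide)
    · intro z hz w hz' hzw
      subst hzw
      have hz0 : z (Fin.last n) = 0 := hlast0 z (by rw [hm0cons]; exact List.mem_cons_of_mem _ hz)
      rw [List.mem_append] at hz'
      rcases hz' with hz' | hz'
      · have := hlast1 _ (List.mem_reverse.1 hz')
        rw [hz0] at this; exact absurd this (by decide)
      · rw [List.mem_singleton] at hz'
        subst hz'
        rw [hm0cons] at hm0nd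
        exact (List.nodup_cons.1 hm0nd).1 hz
  -- coverage
  have hcov : ∀ z : Fin (n+1) → ZMod 2, z ∈ c.support := by
    intro z
    have hz : z = Fin.snoc (Fin.init z) (z (Fin.last n)) := (Fin.snoc_init_self z).symm
    rw [hsup, List.mem_append]
    rcases zmod2_cases (z (Fin.last n)) with h | h
    · left
      rw [hm0sup, List.mem_map]
      exact ⟨Fin.init z, h0c _, by rw [← h, ← hz]⟩
    · right
      rw [List.mem_append]
      left
      rw [List.mem_reverse, hm1sup, List.mem_map]
      exact ⟨Fin.init z, h1c _, by rw [← h, ← hz]⟩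
  -- edges nodup
  have hm0e : ∀ g ∈ m0.edges, ∀ z ∈ g, z (Fin.last n) = 0 := fun g hg => mem_emb_edge_last p0 hg
  have hm1e : ∀ g ∈ m1.edges, ∀ z ∈ g, z (Fin.last n) = 1 := fun g hg => mem_emb_edge_last p1 hg
  have hsnocne : (Fin.snoc u 0 : Fin (n+1) → ZMod 2) ≠ Fin.snoc v 0 := by
    intro h; exact huv (emb_inj n 0 h)
  have hCnd : m1.edges.reverse.Nodup := by
    rw [List.nodup_reverse, hm1, Walk.edges_map]
    exact (h1p.isTrail.edges_nodup).map (Sym2.map.injective (emb_inj n 1))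
  have hAnd : m0.edges.Nodup := by
    rw [hm0, Walk.edges_map]
    exact (h0p.isTrail.edges_nodup).map (Sym2.map.injective (emb_inj n 0))
  have hBne : s(Fin.snoc v 0, (Fin.snoc v 1 : Fin (n+1) → ZMod 2)) ≠ s(Fin.snoc u 1, Fin.snoc u 0) := by
    intro hBeq
    rw [Sym2.eq_iff] at hBeq
    rcases hBeq with ⟨h1, h2⟩ | ⟨h1, h2⟩
    · have := congrArg (fun z => z (Fin.last n)) h1
      simp at this
    · exact huv (emb_inj n 0 (h1 : (emb n 0) v = (emb n 0) u)).symm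
  have hBnotC : s(Fin.snoc v 0, (Fin.snoc v 1 : Fin (n+1) → ZMod 2)) ∉ m1.edges.reverse := by
    intro hmem
    have := hm1e _ (List.mem_reverse.1 hmem) (Fin.snoc v 0) (Sym2.mem_mk_left _ _)
    simp at this
  have hDnotC : s((Fin.snoc u 1 : Fin (n+1) → ZMod 2), Fin.snoc u 0) ∉ m1.edges.reverse := by
    intro hmem
    have := hm1e _ (List.mem_reverse.1 hmem) (Fin.snoc u 0) (Sym2.mem_mk_right _ _)
    simp at this
  have hAnot : ∀ g ∈ m0.edges, g ∉ (s(Fin.snoc v 0, (Fin.snoc v 1 : Fin (n+1) → ZMod 2)) ::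
      (m1.edges.reverse ++ [s(Fin.snoc u 1, Fin.snoc u 0)])) := by
    intro g hg hmem
    have h0 := hm0e g hg
    rw [List.mem_cons, List.mem_append] at hmem
    rcases hmem with rfl | hmem | hmem
    · have := h0 (Fin.snoc v 1) (Sym2.mem_mk_right _ _)
      simp at this
    · have h1 := hm1e _ (List.mem_reverse.1 hmem)
      obtain ⟨z, hz⟩ : ∃ z, z ∈ g := ⟨g.out.1, Sym2.out_fst_mem g⟩
      have := h0 z hz
      rw [h1 z hz] at this
      exact absurd this (by decide)
    · rw [List.mem_singleton] at hmem
      subst hmem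
      have := h0 (Fin.snoc u 1) (Sym2.mem_mk_left _ _)
      simp at this
  have hedgend : c.edges.Nodup := by
    rw [hedges, List.nodup_append]
    refine ⟨hAnd, ?_, fun g hg g' hg' hgg => by subst hgg; exact hAnot g hg hg'⟩
    rw [List.nodup_cons, List.mem_append, List.nodup_append]
    exact ⟨fun h => h.elim hBnotC (fun h' => hBne (List.mem_singleton.1 h')),
      hCnd, List.nodup_singleton _, fun g hg g' hg' hgg => by subst hgg; exact hDnotC ((List.mem_singleton.1 hg') ▸ hg)⟩
  have hBmem : s(Fin.snoc v 0, (Fin.snoc v 1 : Fin (n+1) → ZMod 2)) ∈ c.edges := by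
    rw [hedges]; simp
  have hnenil : c ≠ Walk.nil := by
    intro h
    rw [h] at hBmem
    simp at hBmem
  have hcyc : c.IsCycle := by
    rw [Walk.isCycle_def]
    exact ⟨⟨hedgend⟩, hnenil, htailnd⟩
  have hmemtail : ∀ z : Fin (n+1) → ZMod 2, z ∈ c.support.tail := by
    intro z
    have hz := hcov z
    rw [hsup, List.mem_append] at hz
    rw [hstail, List.mem_append, List.mem_append]
    rcases hz with hz | hz
    · rw [hm0cons, List.mem_cons] at hz
      rcases hz with rfl | hz
      · right; right; simp
      · left; exact hz
    · right
      rw [List.mem_append] at hz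
      exact hz
  have hham : c.IsHamiltonianCycle := by
    rw [Walk.isHamiltonianCycle_iff_isCycle_and_support_count_tail_eq_one]
    exact ⟨hcyc, fun z => List.count_eq_one_of_mem htailnd (hmemtail z)⟩
  refine ⟨c, hham, ?_, ?_⟩
  · intro g hg
    change _ ∈ c.edges
    rw [hedges, List.mem_append]
    left
    rw [hm0, Walk.edges_map]
    exact List.mem_map_of_mem hg
  · intro g hg
    change _ ∈ c.edges
    rw [hedges, List.mem_append]
    right
    rw [List.mem_cons, List.mem_append]
    right; left
    rw [List.mem_reverse, hm1, Walk.edges_map]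
    exact List.mem_map_of_mem hg


lemma hammingDist_comp_equiv {n : ℕ} (x y : Fin n → ZMod 2) (σ : Equiv.Perm (Fin n)) :
    hammingDist (x ∘ σ) (y ∘ σ) = hammingDist x y := by
  simp only [hammingDist]
  apply Finset.card_bij (fun i _ => σ i)
  · intro i hi
    simp only [Finset.mem_filter, Finset.mem_univ, true_and] at hi ⊢
    exact hi
  · intro i hi j hj h
    exact σ.injective h
  · intro j hj
    simp only [Finset.mem_filter, Finset.mem_univ, true_and] at hj ⊢
    exact ⟨σ.symm j, by simpa using hj, by simp⟩

def permIso (n : ℕ) (σ : Equiv.Perm (Fin n)) : Q n ≃g Q n where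
  toEquiv := Equiv.arrowCongr σ.symm (Equiv.refl (ZMod 2))
  map_rel_iff' := by
    intro x y
    show hammingDist _ _ = 1 ↔ hammingDist x y = 1
    have hx : (Equiv.arrowCongr σ.symm (Equiv.refl (ZMod 2))) x = x ∘ σ := rfl
    have hy : (Equiv.arrowCongr σ.symm (Equiv.refl (ZMod 2))) y = y ∘ σ := rfl
    rw [hx, hy, hammingDist_comp_equiv]

@[simp] lemma permIso_apply (n : ℕ) (σ : Equiv.Perm (Fin n)) (x : Fin n → ZMod 2) (i : Fin n) :
    permIso n σ x i = x (σ i) := rfl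

def transIso (n : ℕ) (t : Fin n → ZMod 2) : Q n ≃g Q n where
  toEquiv := Equiv.addRight t
  map_rel_iff' := by
    intro x y
    show hammingDist (x + t) (y + t) = 1 ↔ hammingDist x y = 1
    rw [hammingDist_eq_hammingNorm, hammingDist_eq_hammingNorm x y]
    congr! 2
    abel

@[simp] lemma transIso_apply (n : ℕ) (t x : Fin n → ZMod 2) :
    transIso n t x = x + t := rfl

/-- transfer an existence statement through an automorphism -/
lemma iso_transfer {n : ℕ} (φ : Q n ≃g Q n) (e f : Sym2 (Fin n → ZMod 2))
    (h : ∃ (v : Fin n → ZMod 2) (c : (Q n).Walk v v),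
      c.IsHamiltonianCycle ∧ Sym2.map φ e ∈ c.edges ∧ Sym2.map φ f ∈ c.edges) :
    ∃ (v : Fin n → ZMod 2) (c : (Q n).Walk v v),
      c.IsHamiltonianCycle ∧ e ∈ c.edges ∧ f ∈ c.edges := by
  have key : ∀ g : Sym2 (Fin n → ZMod 2), Sym2.map φ.symm (Sym2.map φ g) = g := by
    intro g
    induction g using Sym2.ind with
    | _ x y => simp [Sym2.map_pair_eq]
  obtain ⟨v, c, hc, he, hf⟩ := h
  refine ⟨φ.symm v, c.map φ.symm.toHom, hc.map φ.symm.bijective, ?_, ?_⟩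
  · rw [Walk.edges_map, ← key e]
    exact List.mem_map_of_mem he
  · rw [Walk.edges_map, ← key f]
    exact List.mem_map_of_mem hf

lemma edge_mem_edgeSet_map {n : ℕ} (φ : Q n ≃g Q n) (e : Sym2 (Fin n → ZMod 2))
    (he : e ∈ (Q n).edgeSet) : Sym2.map φ e ∈ (Q n).edgeSet := by
  induction e using Sym2.ind with
  | _ x y =>
    rw [Sym2.map_pair_eq, SimpleGraph.mem_edgeSet] at *
    exact φ.map_adj_iff.2 he


instance QAdjDec (n : ℕ) : DecidableRel (Q n).Adj := fun x y =>
  inferInstanceAs (Decidable (hammingDist x y = 1))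

def v00 : Fin 2 → ZMod 2 := ![0, 0]
def v01 : Fin 2 → ZMod 2 := ![0, 1]
def v11 : Fin 2 → ZMod 2 := ![1, 1]
def v10 : Fin 2 → ZMod 2 := ![1, 0]

lemma a1 : (Q 2).Adj v00 v01 := by decide
lemma a2 : (Q 2).Adj v01 v11 := by decide
lemma a3 : (Q 2).Adj v11 v10 := by decide
lemma a4 : (Q 2).Adj v10 v00 := by decide

def c2 : (Q 2).Walk v00 v00 :=
  Walk.cons a1 (Walk.cons a2 (Walk.cons a3 (Walk.cons a4 Walk.nil)))

lemma c2_ham : c2.IsHamiltonianCycle := by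
  rw [Walk.isHamiltonianCycle_iff_isCycle_and_support_count_tail_eq_one]
  constructor
  · rw [Walk.isCycle_def]
    refine ⟨⟨?_⟩, ?_, ?_⟩
    · show (c2.edges).Nodup
      decide
    · simp [c2]
    · show (c2.support.tail).Nodup
      decide
  · decide

lemma base_all_edges : ∀ e ∈ (Q 2).edgeSet, e ∈ c2.edges := by
  intro e he
  induction e using Sym2.ind with
  | _ x y =>
    rw [SimpleGraph.mem_edgeSet] at he
    revert he
    revert x y
    decide


lemma adj_down {n : ℕ} {x y : Fin (n+1) → ZMod 2} (h : (Q (n+1)).Adj x y)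
    (hl : x (Fin.last n) = y (Fin.last n)) : (Q n).Adj (Fin.init x) (Fin.init y) := by
  have hd : hammingDist x y = 1 := h
  rw [← Fin.snoc_init_self x, ← Fin.snoc_init_self y, hammingDist_snoc] at hd
  rw [hl] at hd
  simp only [if_pos rfl, add_zero] at hd
  exact hd

lemma step_core {n : ℕ}
    (IH : ∀ e f : Sym2 (Fin n → ZMod 2), e ∈ (Q n).edgeSet → f ∈ (Q n).edgeSet →
      ∃ (v : Fin n → ZMod 2) (c : (Q n).Walk v v),
        c.IsHamiltonianCycle ∧ e ∈ c.edges ∧ f ∈ c.edges)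
    (x0 y0 x1 y1 : Fin n → ZMod 2) (b : ZMod 2)
    (h0 : (Q n).Adj x0 y0) (h1 : (Q n).Adj x1 y1) :
    ∃ (v : Fin (n+1) → ZMod 2) (c : (Q (n+1)).Walk v v), c.IsHamiltonianCycle ∧
      s(Fin.snoc x0 0, Fin.snoc y0 0) ∈ c.edges ∧ s(Fin.snoc x1 b, Fin.snoc y1 b) ∈ c.edges := by
  classical
  rcases zmod2_cases b with rfl | rfl
  · -- both edges in the bottom copy
    obtain ⟨a, C, hC, heC, hfC⟩ := IH s(x0, y0) s(x1, y1) h0 h1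
    obtain ⟨g, hgC, hge, hgf⟩ := exists_third_edge hC.isCycle s(x0, y0) s(x1, y1)
    have hgE : g ∈ (Q n).edgeSet := C.edges_subset_edgeSet hgC
    revert hgC hge hgf hgE
    induction g using Sym2.ind with
    | _ u w =>
      intro hgC hge hgf hgE
      rw [SimpleGraph.mem_edgeSet] at hgE
      obtain ⟨p0, hp0path, hp0cov, hp0keep⟩ := extract C hC hgC
      obtain ⟨a1, C1, hC1, hgC1, -⟩ := IH s(u, w) s(u, w) hgE hgE
      obtain ⟨p1, hp1path, hp1cov, -⟩ := extract C1 hC1 hgC1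
      obtain ⟨c, hcham, hc0, hc1⟩ := glue u w hgE.ne p0 p1 hp0path hp0cov hp1path hp1cov
      refine ⟨_, c, hcham, ?_, ?_⟩
      · have := hc0 s(x0, y0) (hp0keep _ heC hge.symm)
        rwa [Sym2.map_pair_eq] at this
      · have := hc0 s(x1, y1) (hp0keep _ hfC hgf.symm)
        rwa [Sym2.map_pair_eq] at this
  · -- edges in different copies
    obtain ⟨a, C, hC, heC, -⟩ := IH s(x0, y0) s(x0, y0) h0 h0
    obtain ⟨g, hgC, hge, hgf⟩ := exists_third_edge hC.isCycle s(x0, y0) s(x1, y1)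
    have hgE : g ∈ (Q n).edgeSet := C.edges_subset_edgeSet hgC
    revert hgC hge hgf hgE
    induction g using Sym2.ind with
    | _ u w =>
      intro hgC hge hgf hgE
      rw [SimpleGraph.mem_edgeSet] at hgE
      obtain ⟨p0, hp0path, hp0cov, hp0keep⟩ := extract C hC hgC
      obtain ⟨a1, C1, hC1, hgC1, hfC1⟩ := IH s(u, w) s(x1, y1) hgE (((Q n).mem_edgeSet).2 h1)
      obtain ⟨p1, hp1path, hp1cov, hp1keep⟩ := extract C1 hC1 hgC1
      obtain ⟨c, hcham, hc0, hc1⟩ := glue u w hgE.ne p0 p1 hp0path hp0cov hp1path hp1cov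
      refine ⟨_, c, hcham, ?_, ?_⟩
      · have := hc0 s(x0, y0) (hp0keep _ heC hge.symm)
        rwa [Sym2.map_pair_eq] at this
      · have := hc1 s(x1, y1) (hp1keep _ hfC1 hgf.symm)
        rwa [Sym2.map_pair_eq] at this

/-- Any two edges of the hypercube `Q_n` (`n ≥ 2`) lie on a common Hamiltonian cycle. -/
theorem stmt0 (n : ℕ) (hn : 2 ≤ n) (e f : Sym2 (Fin n → ZMod 2))
    (he : e ∈ (Q n).edgeSet) (hf : f ∈ (Q n).edgeSet) :
    ∃ (v : Fin n → ZMod 2) (c : (Q n).Walk v v),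
      c.IsHamiltonianCycle ∧ e ∈ c.edges ∧ f ∈ c.edges := by
  classical
  induction n, hn using Nat.le_induction with
  | base =>
    exact ⟨v00, c2, c2_ham, base_all_edges e he, base_all_edges f hf⟩
  | succ n hn IH =>
    induction e using Sym2.ind with
    | _ xe ye =>
      induction f using Sym2.ind with
      | _ xf yf =>
        rw [SimpleGraph.mem_edgeSet] at he hf
        -- find a coordinate where both edges are constant
        set De := Finset.univ.filter (fun i => xe i ≠ ye i) with hDe
        set Df := Finset.univ.filter (fun i => xf i ≠ yf i) with hDf
        have hcDe : De.card = 1 := he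
        have hcDf : Df.card = 1 := hf
        have hk : ∃ k, k ∉ De ∪ Df := by
          by_contra hcon
          push_neg at hcon
          have hsub : (Finset.univ : Finset (Fin (n+1))) ⊆ De ∪ Df := fun x _ => hcon x
          have := Finset.card_le_card hsub
          rw [Finset.card_univ] at this
          have h2 := Finset.card_union_le De Df
          rw [hcDe, hcDf] at h2
          simp at this
          omega
        obtain ⟨k, hk⟩ := hk
        rw [Finset.mem_union] at hk
        push_neg at hk
        have hke : xe k = ye k := by
          have := hk.1; rw [hDe, Finset.mem_filter] at this; push_neg at this
          exact this (Finset.mem_univ k)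
        have hkf : xf k = yf k := by
          have := hk.2; rw [hDf, Finset.mem_filter] at this; push_neg at this
          exact this (Finset.mem_univ k)
        -- swap coordinate k with the last one
        set σ := Equiv.swap k (Fin.last n) with hσ
        set φ := permIso (n+1) σ with hφ
        apply iso_transfer φ
        rw [Sym2.map_pair_eq, Sym2.map_pair_eq]
        -- translate so the first edge lands in the bottom copy
        set t : Fin (n+1) → ZMod 2 := Fin.snoc (fun _ => 0) (φ xe (Fin.last n)) with ht
        apply iso_transfer (transIso (n+1) t)
        rw [Sym2.map_pair_eq, Sym2.map_pair_eq]
        simp only [transIso_apply]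
        set xE := φ xe + t with hxE
        set yE := φ ye + t with hyE
        set xF := φ xf + t with hxF
        set yF := φ yf + t with hyF
        -- last coordinates
        have hσlast : σ (Fin.last n) = k := Equiv.swap_apply_right k (Fin.last n)
        have htlast : t (Fin.last n) = xe k := by
          rw [ht]; simp [hφ, hσlast]
        have hxEl : xE (Fin.last n) = 0 := by
          rw [hxE]
          show φ xe (Fin.last n) + t (Fin.last n) = 0
          rw [htlast]
          show xe (σ (Fin.last n)) + xe k = 0
          rw [hσlast]
          exact CharTwo.add_self_eq_zero _
        have hyEl : yE (Fin.last n) = 0 := by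
          rw [hyE]
          show φ ye (Fin.last n) + t (Fin.last n) = 0
          rw [htlast]
          show ye (σ (Fin.last n)) + xe k = 0
          rw [hσlast, ← hke]
          exact CharTwo.add_self_eq_zero _
        have hFl : xF (Fin.last n) = yF (Fin.last n) := by
          rw [hxF, hyF]
          show xf (σ (Fin.last n)) + t (Fin.last n) = yf (σ (Fin.last n)) + t (Fin.last n)
          rw [hσlast, hkf]
        -- adjacency of images
        have hadjE : (Q (n+1)).Adj xE yE := by
          have h1 : (Q (n+1)).Adj (φ xe) (φ ye) := φ.map_adj_iff.2 he
          exact ((transIso (n+1) t).map_adj_iff.2 h1 : _)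
        have hadjF : (Q (n+1)).Adj xF yF := by
          have h1 : (Q (n+1)).Adj (φ xf) (φ yf) := φ.map_adj_iff.2 hf
          exact ((transIso (n+1) t).map_adj_iff.2 h1 : _)
        have hadjE' : (Q n).Adj (Fin.init xE) (Fin.init yE) :=
          adj_down hadjE (by rw [hxEl, hyEl])
        have hadjF' : (Q n).Adj (Fin.init xF) (Fin.init yF) := adj_down hadjF hFl
        obtain ⟨v, c, hham, hmem1, hmem2⟩ :=
          step_core IH (Fin.init xE) (Fin.init yE) (Fin.init xF) (Fin.init yF)
            (xF (Fin.last n)) hadjE' hadjF'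
        refine ⟨v, c, hham, ?_, ?_⟩
        · have hx : Fin.snoc (Fin.init xE) (0 : ZMod 2) = xE := by
            rw [← hxEl]; exact Fin.snoc_init_self xE
          have hy : Fin.snoc (Fin.init yE) (0 : ZMod 2) = yE := by
            rw [← hyEl]; exact Fin.snoc_init_self yE
          rwa [hx, hy] at hmem1
        · have hx : Fin.snoc (Fin.init xF) (xF (Fin.last n)) = xF := Fin.snoc_init_self xF
          have hy : Fin.snoc (Fin.init yF) (xF (Fin.last n)) = yF := by
            rw [hFl]; exact Fin.snoc_init_self yF
          rwa [hx, hy] at hmem2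
end

section
/- For m, n ≥ 2, the grid graph P_m × P_n (Cartesian product of paths on m and n vertices) contains a cycle of length l for every even integer l with 4 ≤ l ≤ mn. -/
open List

/-- grid adjacency on ℕ × ℕ -/
def gRel (x y : ℕ × ℕ) : Prop :=
  (x.1 = y.1 ∧ (x.2 + 1 = y.2 ∨ y.2 + 1 = x.2)) ∨
  (x.2 = y.2 ∧ (x.1 + 1 = y.1 ∨ y.1 + 1 = x.1))

def hrow (r c w : ℕ) : List (ℕ × ℕ) := (List.range w).map fun j => (r, c + j)
def hrowR (r c w : ℕ) : List (ℕ × ℕ) := (List.range w).map fun j => (r, c + w - 1 - j)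
def vcol (a : ℕ) : List (ℕ × ℕ) := (List.range a).map fun i => (i, 0)

lemma chain'_map_range {α : Type*} {S : α → α → Prop} (f : ℕ → α) (w : ℕ)
    (h : ∀ i, i + 1 < w → S (f i) (f (i + 1))) : List.Chain' S ((List.range w).map f) := by
  simp only [List.Chain']
  rw [List.isChain_map, List.isChain_iff_getElem]
  intro i hi
  simp only [List.length_range] at hi
  simp only [List.get_eq_getElem, List.getElem_range]
  exact h i (by omega)

lemma head?_map_range {α : Type*} (f : ℕ → α) (w : ℕ) (hw : 0 < w) :
    ((List.range w).map f).head? = some (f 0) := by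
  cases w with
  | zero => omega
  | succ w => rw [List.range_succ_eq_map]; simp

lemma getLast?_map_range {α : Type*} (f : ℕ → α) (w : ℕ) (hw : 0 < w) :
    ((List.range w).map f).getLast? = some (f (w - 1)) := by
  rw [List.getLast?_eq_getElem?]
  have h1 : w - 1 < ((List.range w).map f).length := by simp; omega
  rw [List.getElem?_eq_getElem (by simpa using h1)]
  simp

lemma mem_hrow {x : ℕ × ℕ} {r c w : ℕ} (h : x ∈ hrow r c w) :
    x.1 = r ∧ c ≤ x.2 ∧ x.2 < c + w := by
  simp only [hrow, List.mem_map, List.mem_range] at h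
  obtain ⟨j, hj, rfl⟩ := h; simp; omega

lemma mem_hrowR {x : ℕ × ℕ} {r c w : ℕ} (h : x ∈ hrowR r c w) :
    x.1 = r ∧ c ≤ x.2 ∧ x.2 < c + w := by
  simp only [hrowR, List.mem_map, List.mem_range] at h
  obtain ⟨j, hj, rfl⟩ := h; simp; omega

lemma mem_vcol {x : ℕ × ℕ} {a : ℕ} (h : x ∈ vcol a) : x.1 < a ∧ x.2 = 0 := by
  simp only [vcol, List.mem_map, List.mem_range] at h
  obtain ⟨j, hj, rfl⟩ := h; simp; omega

lemma chain'_hrow (r c w : ℕ) : List.Chain' gRel (hrow r c w) :=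
  chain'_map_range _ _ (fun i _ => by simp [gRel]; try omega)

lemma chain'_hrowR (r c w : ℕ) : List.Chain' gRel (hrowR r c w) :=
  chain'_map_range _ _ (fun i hi => by simp [gRel]; try omega)

lemma chain'_vcol (a : ℕ) : List.Chain' gRel (vcol a) :=
  chain'_map_range _ _ (fun i _ => by simp [gRel]; try omega)

lemma nodup_hrow (r c w : ℕ) : (hrow r c w).Nodup :=
  (List.nodup_range (n := w)).map_on (by intro x hx y hy h; simp at h hx hy; omega)

lemma nodup_hrowR (r c w : ℕ) : (hrowR r c w).Nodup :=
  (List.nodup_range (n := w)).map_on (by intro x hx y hy h; simp at h hx hy; omega)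

lemma nodup_vcol (a : ℕ) : (vcol a).Nodup :=
  (List.nodup_range (n := a)).map_on (by intro x hx y hy h; simp at h hx hy; omega)

lemma length_hrow (r c w : ℕ) : (hrow r c w).length = w := by simp [hrow]
lemma length_hrowR (r c w : ℕ) : (hrowR r c w).length = w := by simp [hrowR]
lemma length_vcol (a : ℕ) : (vcol a).length = a := by simp [vcol]

lemma head?_hrow (r c w : ℕ) (hw : 0 < w) : (hrow r c w).head? = some (r, c) := by
  rw [hrow, head?_map_range _ _ hw]; simp
lemma head?_hrowR (r c w : ℕ) (hw : 0 < w) : (hrowR r c w).head? = some (r, c + w - 1) := by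
  rw [hrowR, head?_map_range _ _ hw]; simp
lemma head?_vcol (a : ℕ) (ha : 0 < a) : (vcol a).head? = some (0, 0) := by
  rw [vcol, head?_map_range _ _ ha]
lemma getLast?_hrow (r c w : ℕ) (hw : 0 < w) : (hrow r c w).getLast? = some (r, c + w - 1) := by
  rw [hrow, getLast?_map_range _ _ hw]; congr 2; omega
lemma getLast?_hrowR (r c w : ℕ) (hw : 0 < w) : (hrowR r c w).getLast? = some (r, c) := by
  rw [hrowR, getLast?_map_range _ _ hw]; congr 2; omega
lemma getLast?_vcol (a : ℕ) (ha : 0 < a) : (vcol a).getLast? = some (a - 1, 0) := by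
  rw [vcol, getLast?_map_range _ _ ha]

def pairSeg (r w : ℕ) : List (ℕ × ℕ) := hrow (r + 1) 1 w ++ hrowR r 1 w

def body : List ℕ → ℕ → List (ℕ × ℕ)
  | [], _ => []
  | w :: ws, r => pairSeg (r + 2 * ws.length) w ++ body ws r

lemma hrow_ne_nil (r c w : ℕ) (hw : 0 < w) : hrow r c w ≠ [] := by
  intro h; have := length_hrow r c w; rw [h] at this; simp at this; omega
lemma hrowR_ne_nil (r c w : ℕ) (hw : 0 < w) : hrowR r c w ≠ [] := by
  intro h; have := length_hrowR r c w; rw [h] at this; simp at this; omega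

lemma length_pairSeg (r w : ℕ) : (pairSeg r w).length = 2 * w := by
  simp [pairSeg, length_hrow, length_hrowR]; omega

lemma mem_pairSeg {x : ℕ × ℕ} {r w : ℕ} (h : x ∈ pairSeg r w) :
    (x.1 = r ∨ x.1 = r + 1) ∧ 1 ≤ x.2 ∧ x.2 ≤ w := by
  rcases List.mem_append.mp h with h | h
  · have := mem_hrow h; omega
  · have := mem_hrowR h; omega

lemma chain'_pairSeg (r w : ℕ) (hw : 0 < w) : List.Chain' gRel (pairSeg r w) := by
  refine (chain'_hrow _ _ _).append (chain'_hrowR _ _ _) ?_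
  rw [getLast?_hrow _ _ _ hw, head?_hrowR _ _ _ hw]
  simp [gRel]

lemma head?_pairSeg (r w : ℕ) (hw : 0 < w) : (pairSeg r w).head? = some (r + 1, 1) := by
  rw [pairSeg, List.head?_append_of_ne_nil _ (hrow_ne_nil _ _ _ hw), head?_hrow _ _ _ hw]

lemma getLast?_pairSeg (r w : ℕ) (hw : 0 < w) : (pairSeg r w).getLast? = some (r, 1) := by
  rw [pairSeg, List.getLast?_append_of_ne_nil _ (hrowR_ne_nil _ _ _ hw), getLast?_hrowR _ _ _ hw]

lemma pairSeg_ne_nil (r w : ℕ) (hw : 0 < w) : pairSeg r w ≠ [] := by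
  intro h; have := length_pairSeg r w; rw [h] at this; simp at this; omega

lemma nodup_pairSeg (r w : ℕ) : (pairSeg r w).Nodup := by
  rw [pairSeg, List.nodup_append']
  refine ⟨nodup_hrow _ _ _, nodup_hrowR _ _ _, ?_⟩
  intro x hx hx'
  have h1 := mem_hrow hx; have h2 := mem_hrowR hx'; omega

lemma length_body (ws : List ℕ) (r : ℕ) : (body ws r).length = 2 * ws.sum := by
  induction ws with
  | nil => simp [body]
  | cons w ws ih => simp [body, length_pairSeg, ih]; omega

lemma mem_body {x : ℕ × ℕ} {ws : List ℕ} {r W : ℕ} (hW : ∀ w ∈ ws, w ≤ W) :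
    x ∈ body ws r → r ≤ x.1 ∧ x.1 < r + 2 * ws.length ∧ 1 ≤ x.2 ∧ x.2 ≤ W := by
  induction ws with
  | nil => simp [body]
  | cons w ws ih =>
    intro h
    rcases List.mem_append.mp h with h | h
    · have h1 := mem_pairSeg h
      have h2 : w ≤ W := hW w (by simp)
      simp only [List.length_cons]; omega
    · have := ih (fun u hu => hW u (by simp [hu])) h
      simp only [List.length_cons]; omega

lemma body_ne_nil (ws : List ℕ) (r : ℕ) (hws : ws ≠ []) (h1 : ∀ w ∈ ws, 1 ≤ w) :
    body ws r ≠ [] := by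
  cases ws with
  | nil => simp at hws
  | cons w ws =>
    simp only [body]
    intro h
    rcases List.append_eq_nil_iff.mp h with ⟨h', -⟩
    exact pairSeg_ne_nil _ _ (h1 w (by simp)) h'

lemma head?_body (ws : List ℕ) (r : ℕ) (hws : ws ≠ []) (h1 : ∀ w ∈ ws, 1 ≤ w) :
    (body ws r).head? = some (r + 2 * ws.length - 1, 1) := by
  cases ws with
  | nil => simp at hws
  | cons w ws =>
    rw [body, List.head?_append_of_ne_nil _ (pairSeg_ne_nil _ _ (h1 w (by simp)))]
    rw [head?_pairSeg _ _ (h1 w (by simp))]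
    simp only [List.length_cons]
    congr 2
    try omega

lemma getLast?_body (ws : List ℕ) (r : ℕ) (hws : ws ≠ []) (h1 : ∀ w ∈ ws, 1 ≤ w) :
    (body ws r).getLast? = some (r, 1) := by
  induction ws with
  | nil => simp at hws
  | cons w ws ih =>
    rw [body]
    by_cases h : ws = []
    · subst h
      simp only [body, List.append_nil]
      exact getLast?_pairSeg _ _ (h1 w (by simp))
    · rw [List.getLast?_append_of_ne_nil _ (body_ne_nil ws r h (fun u hu => h1 u (by simp [hu])))]
      exact ih h (fun u hu => h1 u (by simp [hu]))

lemma nodup_body (ws : List ℕ) (r : ℕ) : (body ws r).Nodup := by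
  induction ws with
  | nil => simp [body]
  | cons w ws ih =>
    rw [body, List.nodup_append']
    refine ⟨nodup_pairSeg _ _, ih, ?_⟩
    intro x hx hx'
    have h1 := mem_pairSeg hx
    have h2 := mem_body (W := ws.sum)
      (fun u hu => List.single_le_sum (fun _ _ => Nat.zero_le _) u hu) hx'
    omega

lemma chain'_body_append (ws : List ℕ) (r : ℕ) (rest : List (ℕ × ℕ))
    (h1 : ∀ w ∈ ws, 1 ≤ w) (hrest : List.Chain' gRel rest)
    (hlink : rest = [] ∨ (∃ r', r = r' + 1 ∧ rest.head? = some (r', 1))) :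
    List.Chain' gRel (body ws r ++ rest) := by
  induction ws with
  | nil => simpa [body]
  | cons w ws ih =>
    rw [body, List.append_assoc]
    refine (chain'_pairSeg _ _ (h1 w (by simp))).append
      (ih (fun u hu => h1 u (by simp [hu]))) ?_
    rw [getLast?_pairSeg _ _ (h1 w (by simp))]
    intro x hx y hy
    simp only [Option.mem_def, Option.some.injEq] at hx
    subst hx
    by_cases h : ws = []
    · subst h
      simp only [body, List.nil_append] at hy ⊢
      rcases hlink with rfl | ⟨r', rfl, hh⟩
      · simp at hy
      · rw [hh] at hy
        simp only [Option.mem_def, Option.some.injEq] at hy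
        subst hy
        simp [gRel]
    · rw [List.head?_append_of_ne_nil _ (body_ne_nil ws r h (fun u hu => h1 u (by simp [hu]))),
        head?_body ws r h (fun u hu => h1 u (by simp [hu]))] at hy
      simp only [Option.mem_def, Option.some.injEq] at hy
      subst hy
      have hl : ws.length ≠ 0 := by simpa using h
      exact Or.inr ⟨rfl, by omega⟩

def zig : ℕ → ℕ → List (ℕ × ℕ)
  | _, 0 => []
  | c, e + 1 => (1, c) :: (0, c) :: (0, c - 1) :: (1, c - 1) :: zig (c - 2) e

def tripleSeg (c e : ℕ) : List (ℕ × ℕ) :=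
  hrow 2 1 c ++ zig c e ++ hrowR 1 1 (c - 2 * e) ++ [(0, 1)]

lemma length_zig (c e : ℕ) : (zig c e).length = 4 * e := by
  induction e generalizing c with
  | zero => simp [zig]
  | succ e ih => simp [zig, ih]; omega

lemma mem_zig {x : ℕ × ℕ} {c e : ℕ} (hce : 2 * e < c) (h : x ∈ zig c e) :
    x.1 ≤ 1 ∧ x.2 ≤ c ∧ c < x.2 + 2 * e := by
  induction e generalizing c with
  | zero => simp [zig] at h
  | succ e ih =>
    simp only [zig, List.mem_cons] at h
    rcases h with rfl | rfl | rfl | rfl | h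
    · simp; try omega
    · simp; try omega
    · simp; try omega
    · simp; try omega
    · have := ih (c := c - 2) (by omega) h; omega

lemma nodup_zig (c e : ℕ) (hce : 2 * e < c) : (zig c e).Nodup := by
  induction e generalizing c with
  | zero => simp [zig]
  | succ e ih =>
    have hrec : ∀ x ∈ zig (c - 2) e, x.1 ≤ 1 ∧ x.2 ≤ c - 2 ∧ c - 2 < x.2 + 2 * e := by
      intro x hx
      by_cases he : e = 0
      · subst he; simp [zig] at hx
      · exact mem_zig (by omega) hx
    simp only [zig, List.nodup_cons]
    refine ⟨?_, ?_, ?_, ?_, ih (c - 2) (by omega : 2 * e < c - 2)⟩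
    · simp only [List.mem_cons, not_or, Prod.mk.injEq]
      refine ⟨by omega, by omega, by omega, ?_⟩
      intro h; have := hrec _ h; omega
    · simp only [List.mem_cons, not_or, Prod.mk.injEq]
      refine ⟨by omega, by omega, ?_⟩
      intro h; have := hrec _ h; omega
    · simp only [List.mem_cons, not_or, Prod.mk.injEq]
      refine ⟨by omega, ?_⟩
      intro h; have := hrec _ h; omega
    · intro h; have := hrec _ h; omega

lemma head?_zig_append (c e : ℕ) (rest : List (ℕ × ℕ)) (he : 0 < e) :
    (zig c e ++ rest).head? = some (1, c) := by
  cases e with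
  | zero => omega
  | succ e => simp [zig]

lemma chain'_zig_append (c e : ℕ) (rest : List (ℕ × ℕ)) (hce : 2 * e < c)
    (hrest : List.Chain' gRel rest) (hhead : rest.head? = some (1, c - 2 * e)) :
    List.Chain' gRel (zig c e ++ rest) := by
  induction e generalizing c with
  | zero => simpa [zig] using hrest
  | succ e ih =>
    have htail : List.Chain' gRel (zig (c - 2) e ++ rest) := by
      refine ih (c - 2) (by omega) ?_
      rw [hhead]; congr 2; omega
    have hh : (zig (c - 2) e ++ rest).head? = some (1, c - 2) := by
      by_cases he : e = 0
      · subst he; simp [zig]; rw [hhead]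
      · exact head?_zig_append _ _ _ (by omega)
    simp only [zig, List.cons_append]
    refine List.IsChain.cons_cons ?_ (List.IsChain.cons_cons ?_ (List.IsChain.cons_cons ?_ ?_))
    · simp [gRel]; try omega
    · simp [gRel]; try omega
    · simp [gRel]; try omega
    · cases hzr : (zig (c - 2) e ++ rest) with
      | nil => simp [hzr] at hh
      | cons y t =>
        rw [hzr] at hh htail
        simp only [List.head?_cons, Option.some.injEq] at hh
        subst hh
        refine List.IsChain.cons_cons ?_ htail
        simp [gRel]
        try omega

lemma length_tripleSeg (c e : ℕ) (hce : 2 * e < c) :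
    (tripleSeg c e).length = 2 * c + 2 * e + 1 := by
  simp [tripleSeg, length_hrow, length_hrowR, length_zig]; omega

lemma mem_tripleSeg {x : ℕ × ℕ} {c e : ℕ} (hce : 2 * e < c) (h : x ∈ tripleSeg c e) :
    x.1 ≤ 2 ∧ 1 ≤ x.2 ∧ x.2 ≤ c := by
  simp only [tripleSeg, List.append_assoc, List.mem_append, List.mem_singleton] at h
  rcases h with h | h | h | rfl
  · have := mem_hrow h; omega
  · by_cases he : e = 0
    · subst he; simp [zig] at h
    · have := mem_zig hce h; omega
  · have := mem_hrowR h; omega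
  · simp; omega

lemma nodup_tripleSeg (c e : ℕ) (hce : 2 * e < c) : (tripleSeg c e).Nodup := by
  have hz : ∀ x ∈ zig c e, x.1 ≤ 1 ∧ x.2 ≤ c ∧ c < x.2 + 2 * e := by
    intro x hx
    by_cases he : e = 0
    · subst he; simp [zig] at hx
    · exact mem_zig hce hx
  simp only [tripleSeg, List.append_assoc]
  rw [List.nodup_append']
  refine ⟨nodup_hrow _ _ _, ?_, ?_⟩
  · rw [List.nodup_append']
    refine ⟨nodup_zig _ _ hce, ?_, ?_⟩
    · rw [List.nodup_append']
      refine ⟨nodup_hrowR _ _ _, by simp, ?_⟩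
      intro x hx hx'
      simp only [List.mem_singleton] at hx'
      subst hx'
      have := mem_hrowR hx; omega
    · intro x hx hx'
      have h1 := hz x hx
      simp only [List.mem_append, List.mem_singleton] at hx'
      rcases hx' with h | rfl
      · have := mem_hrowR h; omega
      · omega
  · intro x hx hx'
    have h1 := mem_hrow hx
    simp only [List.mem_append, List.mem_singleton] at hx'
    rcases hx' with h | h | rfl
    · have := hz x h; omega
    · have := mem_hrowR h; omega
    · omega

lemma getLast?_tripleSeg (c e : ℕ) : (tripleSeg c e).getLast? = some (0, 1) := by
  simp [tripleSeg]

lemma head?_tripleSeg (c e : ℕ) (hc : 0 < c) : (tripleSeg c e).head? = some (2, 1) := by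
  rw [tripleSeg, List.append_assoc, List.append_assoc,
    List.head?_append_of_ne_nil _ (hrow_ne_nil _ _ _ hc), head?_hrow _ _ _ hc]

lemma tripleSeg_ne_nil (c e : ℕ) : tripleSeg c e ≠ [] := by
  simp [tripleSeg]

lemma chain'_tripleSeg (c e : ℕ) (hc : 1 ≤ c) (hce : 2 * e < c) :
    List.Chain' gRel (tripleSeg c e) := by
  have hcw : 0 < c - 2 * e := by omega
  have hrest : List.Chain' gRel (hrowR 1 1 (c - 2 * e) ++ [(0, 1)]) := by
    refine (chain'_hrowR _ _ _).append (by simp) ?_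
    rw [getLast?_hrowR _ _ _ hcw]
    simp [gRel]
  have hresthead : (hrowR 1 1 (c - 2 * e) ++ [(0, 1)]).head? = some (1, c - 2 * e) := by
    rw [List.head?_append_of_ne_nil _ (hrowR_ne_nil _ _ _ hcw), head?_hrowR _ _ _ hcw]
    congr 2; omega
  have hzag : List.Chain' gRel (zig c e ++ (hrowR 1 1 (c - 2 * e) ++ [(0, 1)])) :=
    chain'_zig_append _ _ _ hce hrest hresthead
  have hzaghead : (zig c e ++ (hrowR 1 1 (c - 2 * e) ++ [(0, 1)])).head? = some (1, c) := by
    by_cases he : e = 0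
    · subst he
      rw [show zig c 0 = [] from rfl, List.nil_append, hresthead]
      congr 2
    · exact head?_zig_append _ _ _ (by omega)
  rw [tripleSeg, List.append_assoc, List.append_assoc]
  refine (chain'_hrow _ _ _).append hzag ?_
  rw [getLast?_hrow _ _ _ hc, hzaghead]
  simp [gRel]; try omega

def evenL (ws : List ℕ) : List (ℕ × ℕ) := vcol (2 * ws.length) ++ body ws 0

def oddL (ws : List ℕ) (c e : ℕ) : List (ℕ × ℕ) :=
  vcol (2 * ws.length + 3) ++ (body ws 3 ++ tripleSeg c e)

lemma vcol_ne_nil (a : ℕ) (ha : 0 < a) : vcol a ≠ [] := by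
  intro h; have := length_vcol a; rw [h] at this; simp at this; omega

lemma length_evenL (ws : List ℕ) : (evenL ws).length = 2 * ws.length + 2 * ws.sum := by
  simp [evenL, length_vcol, length_body]

lemma length_oddL (ws : List ℕ) (c e : ℕ) (hce : 2 * e < c) :
    (oddL ws c e).length = 2 * ws.length + 3 + 2 * ws.sum + 2 * c + 2 * e + 1 := by
  simp [oddL, length_vcol, length_body, length_tripleSeg c e hce]; omega

lemma evenL_ne_nil (ws : List ℕ) (hws : ws ≠ []) : evenL ws ≠ [] := by
  intro h
  rcases List.append_eq_nil_iff.mp h with ⟨h', -⟩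
  exact vcol_ne_nil _ (by cases ws with | nil => simp at hws | cons w ws => simp) h'

lemma oddL_ne_nil (ws : List ℕ) (c e : ℕ) : oddL ws c e ≠ [] := by
  intro h
  rcases List.append_eq_nil_iff.mp h with ⟨h', -⟩
  exact vcol_ne_nil _ (by omega) h'

lemma head?_evenL (ws : List ℕ) (hws : ws ≠ []) : (evenL ws).head? = some (0, 0) := by
  have ha : 0 < 2 * ws.length := by cases ws with | nil => simp at hws | cons w ws => simp
  rw [evenL, List.head?_append_of_ne_nil _ (vcol_ne_nil _ ha), head?_vcol _ ha]

lemma head?_oddL (ws : List ℕ) (c e : ℕ) : (oddL ws c e).head? = some (0, 0) := by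
  rw [oddL, List.head?_append_of_ne_nil _ (vcol_ne_nil _ (by omega)), head?_vcol _ (by omega)]

lemma getLast?_evenL (ws : List ℕ) (hws : ws ≠ []) (h1 : ∀ w ∈ ws, 1 ≤ w) :
    (evenL ws).getLast? = some (0, 1) := by
  rw [evenL, List.getLast?_append_of_ne_nil _ (body_ne_nil ws 0 hws h1),
    getLast?_body ws 0 hws h1]

lemma getLast?_oddL (ws : List ℕ) (c e : ℕ) : (oddL ws c e).getLast? = some (0, 1) := by
  rw [oddL, List.getLast?_append_of_ne_nil _ (by simp [tripleSeg]),
    List.getLast?_append_of_ne_nil _ (tripleSeg_ne_nil c e), getLast?_tripleSeg]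

lemma chain'_evenL (ws : List ℕ) (hws : ws ≠ []) (h1 : ∀ w ∈ ws, 1 ≤ w) :
    List.Chain' gRel (evenL ws) := by
  have ha : 0 < 2 * ws.length := by cases ws with | nil => simp at hws | cons w ws => simp
  refine (chain'_vcol _).append ?_ ?_
  · simpa [List.Chain'] using chain'_body_append ws 0 [] h1 List.isChain_nil (Or.inl rfl)
  · rw [getLast?_vcol _ ha, head?_body ws 0 hws h1]
    simp [gRel]; try omega

lemma chain'_oddL (ws : List ℕ) (c e : ℕ) (hc : 1 ≤ c) (hce : 2 * e < c) :
    (∀ w ∈ ws, 1 ≤ w) → List.Chain' gRel (oddL ws c e) := by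
  intro h1
  have htr := chain'_tripleSeg c e hc hce
  refine (chain'_vcol _).append ?_ ?_
  · exact chain'_body_append ws 3 (tripleSeg c e) h1 htr
      (Or.inr ⟨2, rfl, head?_tripleSeg c e hc⟩)
  · rw [getLast?_vcol _ (by omega)]
    by_cases h : ws = []
    · subst h
      simp only [body, List.nil_append]
      rw [head?_tripleSeg c e hc]
      simp [gRel]
    · rw [List.head?_append_of_ne_nil _ (body_ne_nil ws 3 h h1), head?_body ws 3 h h1]
      intro x hx y hy
      simp only [Option.mem_def, Option.some.injEq] at hx hy
      subst hx; subst hy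
      simp [gRel]; try omega

lemma nodup_evenL (ws : List ℕ) : (evenL ws).Nodup := by
  rw [evenL, List.nodup_append']
  refine ⟨nodup_vcol _, nodup_body _ _, ?_⟩
  intro x hx hx'
  have h1 := mem_vcol hx
  have h2 := mem_body (W := ws.sum)
    (fun u hu => List.single_le_sum (fun _ _ => Nat.zero_le _) u hu) hx'
  omega

lemma nodup_oddL (ws : List ℕ) (c e : ℕ) (hce : 2 * e < c) : (oddL ws c e).Nodup := by
  rw [oddL, List.nodup_append']
  refine ⟨nodup_vcol _, ?_, ?_⟩
  · rw [List.nodup_append']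
    refine ⟨nodup_body _ _, nodup_tripleSeg c e hce, ?_⟩
    intro x hx hx'
    have h2 := mem_body (W := ws.sum)
      (fun u hu => List.single_le_sum (fun _ _ => Nat.zero_le _) u hu) hx
    have h3 := mem_tripleSeg hce hx'
    omega
  · intro x hx hx'
    have h1 := mem_vcol hx
    rcases List.mem_append.mp hx' with h | h
    · have := mem_body (W := ws.sum)
        (fun u hu => List.single_le_sum (fun _ _ => Nat.zero_le _) u hu) h
      omega
    · have := mem_tripleSeg hce h
      omega

lemma mem_evenL {x : ℕ × ℕ} {ws : List ℕ} {W : ℕ} (hW : ∀ w ∈ ws, w ≤ W)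
    (h : x ∈ evenL ws) : x.1 < 2 * ws.length ∧ x.2 ≤ W := by
  rcases List.mem_append.mp h with h | h
  · have := mem_vcol h; omega
  · have := mem_body hW h; omega

lemma mem_oddL {x : ℕ × ℕ} {ws : List ℕ} {c e W : ℕ} (hW : ∀ w ∈ ws, w ≤ W)
    (hce : 2 * e < c) (hcW : c ≤ W) (h : x ∈ oddL ws c e) :
    x.1 < 2 * ws.length + 3 ∧ x.2 ≤ W := by
  rcases List.mem_append.mp h with h | h
  · have := mem_vcol h; omega
  · rcases List.mem_append.mp h with h | h
    · have := mem_body hW h; omega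
    · have := mem_tripleSeg hce h; omega

open SimpleGraph List

variable {V : Type*} {G : SimpleGraph V}

lemma exists_walk_of_chain' : ∀ (L : List V) (u w : V),
    List.Chain' G.Adj (u :: (L ++ [w])) → ∃ p : G.Walk u w, p.support = u :: (L ++ [w])
  | [], u, w, h => by
    simp only [List.Chain', List.nil_append, List.isChain_cons_cons, List.isChain_singleton, and_true] at h
    exact ⟨Walk.cons h Walk.nil, by simp⟩
  | x :: L, u, w, h => by
    simp only [List.Chain'] at h
    rw [List.cons_append, List.isChain_cons_cons] at h
    obtain ⟨p, hp⟩ := exists_walk_of_chain' L x w h.2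
    exact ⟨Walk.cons h.1 p, by simp [hp]⟩

lemma not_mem_edges_end_start {u w : V} (p : G.Walk u w) (hp : p.IsPath)
    (hlen : 2 ≤ p.length) : s(w, u) ∉ p.edges := by
  match p with
  | .nil => simp
  | .cons h q =>
    rename_i x
    simp only [Walk.edges_cons, List.mem_cons]
    rintro (he | he)
    · rw [Sym2.eq_iff] at he
      rcases he with ⟨rfl, rfl⟩ | ⟨rfl, -⟩
      · exact G.loopless.irrefl _ h
      · -- q : Walk w w, path ⇒ nil ⇒ length p = 1
        have hq : q.IsPath := (Walk.cons_isPath_iff h q).mp hp |>.1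
        have : q.length = 0 := by
          have := (Path.loop_eq ⟨q, hq⟩)
          simp [Path.nil] at this
          simp [this]
        simp [Walk.length_cons, this] at hlen
    · have : u ∈ q.support := Walk.snd_mem_support_of_mem_edges q he
      have hns := (Walk.cons_isPath_iff h q).mp hp |>.2
      exact hns this

lemma cycle_of_good_list (L : List V) (hlen : 3 ≤ L.length) (hchain : List.Chain' G.Adj L)
    (hherad : L ≠ []) (hloop : G.Adj (L.getLast hherad) (L.head hherad)) (hnodup : L.Nodup) :
    ∃ (u : V) (c : G.Walk u u), c.IsCycle ∧ c.length = L.length := by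
  obtain ⟨a, M, rfl⟩ : ∃ a M, L = a :: M := by
    cases L with
    | nil => simp at hherad
    | cons a M => exact ⟨a, M, rfl⟩
  obtain ⟨N, b, rfl⟩ : ∃ N b, M = N ++ [b] := by
    rcases M.eq_nil_or_concat with rfl | ⟨N, b, rfl⟩
    · simp at hlen
    · exact ⟨N, b, by simpa using rfl⟩
  obtain ⟨p, hp⟩ := exists_walk_of_chain' N a b hchain
  have hsupnodup : p.support.Nodup := hp ▸ hnodup
  have hpath : p.IsPath := Walk.IsPath.mk' hsupnodup
  have hplen : p.length = N.length + 1 := by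
    have := p.length_support
    rw [hp] at this; simp at this; omega
  have hadj : G.Adj b a := by simpa using hloop
  refine ⟨b, Walk.cons hadj p, ?_, ?_⟩
  · rw [Walk.cons_isCycle_iff]
    refine ⟨hpath, not_mem_edges_end_start p hpath ?_⟩
    simp at hlen; omega
  · simp [hplen]

lemma chain'_imp_mem {α : Type*} {R S : α → α → Prop} :
    ∀ {l : List α}, List.Chain' R l → (∀ a ∈ l, ∀ b ∈ l, R a b → S a b) → List.Chain' S l := by
  intro l hc himp
  simp only [List.Chain'] at hc ⊢
  rw [List.isChain_iff_getElem] at hc ⊢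
  intro i hi
  exact himp _ (List.getElem_mem _) _ (List.getElem_mem _) (hc i hi)

open SimpleGraph in
lemma grid_cycle_of_gRel_list (m n : ℕ) (hm : 0 < m) (hn : 0 < n) (L : List (ℕ × ℕ))
    (hlen : 3 ≤ L.length) (hchain : List.Chain' gRel L) (hne : L ≠ [])
    (hloop : gRel (L.getLast hne) (L.head hne)) (hnodup : L.Nodup)
    (hbound : ∀ x ∈ L, x.1 < m ∧ x.2 < n) :
    ∃ (u : Fin m × Fin n) (c : ((pathGraph m).boxProd (pathGraph n)).Walk u u),
      c.IsCycle ∧ c.length = L.length := by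
  set G := (pathGraph m).boxProd (pathGraph n) with hG
  set f : ℕ × ℕ → Fin m × Fin n :=
    fun x => (⟨x.1 % m, Nat.mod_lt _ hm⟩, ⟨x.2 % n, Nat.mod_lt _ hn⟩) with hf
  have hfeq : ∀ x, ∀ hx : x ∈ L, f x = (⟨x.1, (hbound x hx).1⟩, ⟨x.2, (hbound x hx).2⟩) := by
    intro x hx
    have hb := hbound x hx
    simp only [hf, Prod.mk.injEq, Fin.mk.injEq]
    exact ⟨Nat.mod_eq_of_lt hb.1, Nat.mod_eq_of_lt hb.2⟩
  have hadj : ∀ a ∈ L, ∀ b ∈ L, gRel a b → G.Adj (f a) (f b) := by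
    intro a ha b hb hab
    have hba := hbound a ha
    have hbb := hbound b hb
    rw [hG, boxProd_adj]
    rw [hfeq a ha, hfeq b hb]
    rcases hab with ⟨h1, h2⟩ | ⟨h1, h2⟩
    · right
      refine ⟨?_, by simp [h1]⟩
      rw [pathGraph_adj]
      simpa using h2
    · left
      refine ⟨?_, by simp [h1]⟩
      rw [pathGraph_adj]
      simpa using h2
  have hLF : (L.map f) ≠ [] := by simpa using hne
  have hchainF : List.Chain' G.Adj (L.map f) :=
    (List.isChain_map f).mpr (chain'_imp_mem hchain hadj)
  have hlast : (L.map f).getLast hLF = f (L.getLast hne) := by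
    have h1 := List.getLast?_map (f := f) (l := L)
    rw [List.getLast?_eq_getLast hLF, List.getLast?_eq_getLast hne] at h1
    simpa using h1
  have hhead : (L.map f).head hLF = f (L.head hne) := by
    have h1 := List.head?_map (f := f) (l := L)
    rw [List.head?_eq_head hLF, List.head?_eq_head hne] at h1
    simpa using h1
  have hnodupF : (L.map f).Nodup := by
    refine hnodup.map_on ?_
    intro x hx y hy hxy
    rw [hfeq x hx, hfeq y hy] at hxy
    simp only [Prod.mk.injEq, Fin.mk.injEq] at hxy
    exact Prod.ext hxy.1 hxy.2
  obtain ⟨u, c, hc, hlenc⟩ := cycle_of_good_list (G := G) (L.map f)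
    (by simpa using hlen) hchainF hLF (by rw [hlast, hhead]; exact hadj _ (L.getLast_mem hne) _ (L.head_mem hne) hloop) hnodupF
  exact ⟨u, c, hc, by simpa using hlenc⟩

lemma exists_ws : ∀ (p S W : ℕ), 1 ≤ W → p ≤ S → S ≤ p * W →
    ∃ ws : List ℕ, ws.length = p ∧ ws.sum = S ∧ (∀ w ∈ ws, 1 ≤ w) ∧ (∀ w ∈ ws, w ≤ W) := by
  intro p
  induction p with
  | zero =>
    intro S W hW h1 h2
    exact ⟨[], by simp, by simp; omega, by simp, by simp⟩
  | succ p ih =>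
    intro S W hW h1 h2
    have hkey : (p + 1) * W = p * W + W := by ring
    set w := min W (S - p) with hw
    have hmin1 : w ≤ W := min_le_left _ _
    have hmin2 : w ≤ S - p := min_le_right _ _
    have hchoice : w = W ∨ w = S - p := min_choice _ _
    have hpW : p * 1 ≤ p * W := Nat.mul_le_mul_left p hW
    obtain ⟨ws, hlen, hsum, hone, hle⟩ := ih (S - w) W hW (by omega) (by omega)
    exact ⟨w :: ws, by simp [hlen], by simp [hsum]; omega,
      by simp; exact ⟨by omega, hone⟩, by simp; exact ⟨by omega, hle⟩⟩

open SimpleGraph in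
lemma evenCycle (m n p S : ℕ) (hn2 : 2 ≤ n) (hp : 1 ≤ p) (h2pm : 2 * p ≤ m)
    (hS1 : p ≤ S) (hS2 : S ≤ p * (n - 1)) :
    ∃ (u : Fin m × Fin n) (c : ((pathGraph m).boxProd (pathGraph n)).Walk u u),
      c.IsCycle ∧ c.length = 2 * p + 2 * S := by
  obtain ⟨ws, hlen, hsum, hone, hle⟩ := exists_ws p S (n - 1) (by omega) hS1 hS2
  have hws : ws ≠ [] := by intro h; rw [h] at hlen; simp at hlen; omega
  have hmain := grid_cycle_of_gRel_list m n (by omega) (by omega) (evenL ws)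
    (by rw [length_evenL, hlen, hsum]; omega)
    (chain'_evenL ws hws hone) (evenL_ne_nil ws hws) ?_ (nodup_evenL ws) ?_
  · obtain ⟨u, c, hc, hlc⟩ := hmain
    exact ⟨u, c, hc, by rw [hlc, length_evenL, hlen, hsum]⟩
  · have h1 : (evenL ws).getLast (evenL_ne_nil ws hws) = (0, 1) := by
      have := getLast?_evenL ws hws hone
      rw [List.getLast?_eq_getLast (evenL_ne_nil ws hws)] at this
      simpa using this
    have h2 : (evenL ws).head (evenL_ne_nil ws hws) = (0, 0) := by
      have := head?_evenL ws hws
      rw [List.head?_eq_head (evenL_ne_nil ws hws)] at this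
      simpa using this
    rw [h1, h2]
    simp [gRel]
  · intro x hx
    have := mem_evenL hle hx
    rw [hlen] at this
    omega

open SimpleGraph in
lemma oddCycle (m n p S c e : ℕ) (hm : 2 * p + 3 ≤ m) (hc1 : 1 ≤ c) (hce : 2 * e < c)
    (hcn : c + 1 ≤ n) (hS1 : p ≤ S) (hS2 : S ≤ p * (n - 1)) :
    ∃ (u : Fin m × Fin n) (w : ((pathGraph m).boxProd (pathGraph n)).Walk u u),
      w.IsCycle ∧ w.length = 2 * p + 3 + 2 * S + 2 * c + 2 * e + 1 := by
  obtain ⟨ws, hlen, hsum, hone, hle⟩ := exists_ws p S (n - 1) (by omega) hS1 hS2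
  have hmain := grid_cycle_of_gRel_list m n (by omega) (by omega) (oddL ws c e)
    (by rw [length_oddL ws c e hce]; omega)
    (chain'_oddL ws c e hc1 hce hone) (oddL_ne_nil ws c e) ?_ (nodup_oddL ws c e hce) ?_
  · obtain ⟨u, w, hw, hlw⟩ := hmain
    exact ⟨u, w, hw, by rw [hlw, length_oddL ws c e hce, hlen, hsum]⟩
  · have h1 : (oddL ws c e).getLast (oddL_ne_nil ws c e) = (0, 1) := by
      have := getLast?_oddL ws c e
      rw [List.getLast?_eq_getLast (oddL_ne_nil ws c e)] at this
      simpa using this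
    have h2 : (oddL ws c e).head (oddL_ne_nil ws c e) = (0, 0) := by
      have := head?_oddL ws c e
      rw [List.head?_eq_head (oddL_ne_nil ws c e)] at this
      simpa using this
    rw [h1, h2]
    simp [gRel]
  · intro x hx
    have := mem_oddL hle hce (by omega) hx
    rw [hlen] at this
    omega

open SimpleGraph in
lemma swapCycle (m n l : ℕ)
    (h : ∃ (u : Fin n × Fin m) (c : ((pathGraph n).boxProd (pathGraph m)).Walk u u),
      c.IsCycle ∧ c.length = l) :
    ∃ (u : Fin m × Fin n) (c : ((pathGraph m).boxProd (pathGraph n)).Walk u u),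
      c.IsCycle ∧ c.length = l := by
  obtain ⟨u, c, hc, hl⟩ := h
  let φ : (pathGraph n).boxProd (pathGraph m) ≃g (pathGraph m).boxProd (pathGraph n) :=
    SimpleGraph.boxProdComm _ _
  refine ⟨φ u, c.map φ.toHom, hc.map ?_, by rw [SimpleGraph.Walk.length_map, hl]⟩
  exact φ.toEquiv.injective

lemma sideAnalysis (m n s : ℕ) (hm3 : 3 ≤ m) (hn3 : 3 ≤ n) (hns : n < s) (hms : m < s)
    (hl : s + s ≤ m * n) :
    (∃ p S, 1 ≤ p ∧ 2 * p ≤ m ∧ p ≤ S ∧ S ≤ p * (n - 1) ∧ s + s = 2 * p + 2 * S) ∨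
    m % 2 = 1 := by
  obtain ⟨n1, rfl⟩ : ∃ n1, n = n1 + 3 := ⟨n - 3, by omega⟩
  have hd := Nat.div_add_mod (s + n1 + 2) (n1 + 3)
  have hr : (s + n1 + 2) % (n1 + 3) < n1 + 3 := Nat.mod_lt _ (by omega)
  obtain ⟨q1, hq⟩ : ∃ q1, (s + n1 + 2) / (n1 + 3) = q1 + 1 := by
    refine ⟨(s + n1 + 2) / (n1 + 3) - 1, ?_⟩
    rcases Nat.eq_zero_or_pos ((s + n1 + 2) / (n1 + 3)) with h0 | h
    · rw [h0] at hd; simp at hd; omega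
    · omega
  rw [hq] at hd
  have hexp : (n1 + 3) * (q1 + 1) = q1 * n1 + 3 * q1 + n1 + 3 := by ring
  by_cases hqm : 2 * (q1 + 1) ≤ m
  · left
    have hsub : n1 + 3 - 1 = n1 + 2 := by omega
    have he2 : (q1 + 1) * (n1 + 3 - 1) = q1 * n1 + 2 * q1 + n1 + 2 := by rw [hsub]; ring
    exact ⟨q1 + 1, s - (q1 + 1), by omega, hqm, by omega, by omega, by omega⟩
  · right
    by_contra hodd
    have hm2 : m ≤ 2 * q1 := by omega
    have hcompare : m * (n1 + 3) ≤ (2 * q1) * (n1 + 3) := Nat.mul_le_mul_right _ hm2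
    have hx : (2 * q1) * (n1 + 3) = 2 * (q1 * n1) + 6 * q1 := by ring
    omega

/-- The grid `P_m × P_n` (`m, n ≥ 2`) contains a cycle of every even length `l` with
`4 ≤ l ≤ m * n`. -/
theorem stmt17 (m n : ℕ) (hm : 2 ≤ m) (hn : 2 ≤ n)
    (l : ℕ) (hl4 : 4 ≤ l) (hl : l ≤ m * n) (heven : Even l) :
    ∃ (v : Fin m × Fin n)
      (c : ((SimpleGraph.pathGraph m).boxProd (SimpleGraph.pathGraph n)).Walk v v),
      c.IsCycle ∧ c.length = l := by
  obtain ⟨s, rfl⟩ := heven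
  have hs2 : 2 ≤ s := by omega
  by_cases hsn : s ≤ n
  · have hone : 1 * (n - 1) = n - 1 := one_mul _
    obtain ⟨u, c, hc, hlen⟩ := evenCycle m n 1 (s - 1) hn (by omega) (by omega) (by omega)
      (by omega)
    exact ⟨u, c, hc, by omega⟩
  by_cases hsm : s ≤ m
  · have hone : 1 * (m - 1) = m - 1 := one_mul _
    refine swapCycle m n (s + s) ?_
    obtain ⟨u, c, hc, hlen⟩ := evenCycle n m 1 (s - 1) hm (by omega) (by omega) (by omega)
      (by omega)
    exact ⟨u, c, hc, by omega⟩
  have hm3 : 3 ≤ m := by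
    by_contra h
    have hm2 : m = 2 := by omega
    subst hm2
    omega
  have hn3 : 3 ≤ n := by
    by_contra h
    have hn2 : n = 2 := by omega
    subst hn2
    omega
  rcases sideAnalysis m n s hm3 hn3 (by omega) (by omega) hl with ⟨p, S, h1, h2, h3, h4, h5⟩ | hmodd
  · obtain ⟨u, c, hc, hlen⟩ := evenCycle m n p S hn h1 h2 h3 h4
    exact ⟨u, c, hc, by omega⟩
  rcases sideAnalysis n m s hn3 hm3 (by omega) (by omega)
    (by rw [Nat.mul_comm]; exact hl) with ⟨p, S, h1, h2, h3, h4, h5⟩ | hnodd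
  · refine swapCycle m n (s + s) ?_
    obtain ⟨u, c, hc, hlen⟩ := evenCycle n m p S hm h1 h2 h3 h4
    exact ⟨u, c, hc, by omega⟩
  -- both m and n odd
  obtain ⟨p, rfl⟩ : ∃ p, m = 2 * p + 3 := ⟨(m - 3) / 2, by omega⟩
  obtain ⟨k, rfl⟩ : ∃ k, n = 2 * k + 3 := ⟨(n - 3) / 2, by omega⟩
  have hmn : (2 * p + 3) * (2 * k + 3) = 4 * (p * k) + 6 * p + 6 * k + 9 := by ring
  have hlodd : s + s ≤ 4 * (p * k) + 6 * p + 6 * k + 8 := by omega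
  have hsub : 2 * k + 3 - 1 = 2 * k + 2 := by omega
  have hpn : p * (2 * k + 3 - 1) = 2 * (p * k) + 2 * p := by rw [hsub]; ring
  by_cases hbr : 2 * (2 * (p * k) + 2 * p) + 3 ≤ s + s - (2 * p + 3)
  · set T := s + s - (2 * p + 3) - (4 * (p * k) + 4 * p) with hT
    have hT3 : 3 ≤ T := by omega
    have hTodd : T % 2 = 1 := by omega
    have hTle : T ≤ 6 * k + 5 := by omega
    set c := min (2 * k + 2) ((T - 1) / 2) with hc
    have hcmin1 : c ≤ 2 * k + 2 := min_le_left _ _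
    have hcmin2 : c ≤ (T - 1) / 2 := min_le_right _ _
    have hcch : c = 2 * k + 2 ∨ c = (T - 1) / 2 := min_choice _ _
    set e := (T - 1 - 2 * c) / 2 with he
    obtain ⟨u, w, hw, hlen⟩ := oddCycle (2 * p + 3) (2 * k + 3) p (2 * (p * k) + 2 * p) c e
      (by omega) (by omega) (by omega) (by omega) (by omega) (by omega)
    exact ⟨u, w, hw, by omega⟩
  · obtain ⟨u, w, hw, hlen⟩ := oddCycle (2 * p + 3) (2 * k + 3) p
      ((s + s - (2 * p + 3) - 3) / 2) 1 0
      (by omega) (by omega) (by omega) (by omega) (by omega) (by omega)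
    exact ⟨u, w, hw, by omega⟩
end
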